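/- A full-rank state cannot be converted into a pure resource state by free operations: let F be a nonempty closed set of density matrices on ℂ^d, let O be a set of quantum channels each of which maps F into F, let ρ be a density matrix of full rank, and let |φ⟩⟨φ| be a pure state with |φ⟩⟨φ| ∉ F. Then it is not the case that for every ε > 0 there exists Λ ∈ O with ⟨φ|Λ(ρ)|φ⟩ > 1 − ε (equivalently, with ‖Λ(ρ) − |φ⟩⟨φ|‖₁ < ε). -/

import Mathlib

open scoped Matrix Kronecker ComplexOrder

noncomputable section

/-- A density matrix: positive semidefinite with unit trace. -/
def IsDensityMatrix {ι : Type*} [Fintype ι] (ρ : Matrix ι ι ℂ) : Prop :=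
  ρ.PosSemidef ∧ ρ.trace = 1

/-- The trace norm `‖M‖₁ = Tr √(M† M)`. -/
noncomputable def traceNorm {ι : Type*} [Fintype ι] [DecidableEq ι]
    (M : Matrix ι ι ℂ) : ℝ :=
  (((Matrix.posSemidef_conjTranspose_mul_self M).isHermitian.eigenvectorUnitary.1 *
      Matrix.diagonal ((fun x : ℝ => (x : ℂ)) ∘ (√·) ∘ (Matrix.posSemidef_conjTranspose_mul_self M).isHermitian.eigenvalues) *
      (star (Matrix.posSemidef_conjTranspose_mul_self M).isHermitian.eigenvectorUnitary :
        Matrix ι ι ℂ)).trace).re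

/-- The amplification `Λ ⊗ id_k` of a linear map on matrices. -/
def amplify {ι : Type*} [Fintype ι] [DecidableEq ι]
    (Λ : Matrix ι ι ℂ →ₗ[ℂ] Matrix ι ι ℂ) (k : ℕ)
    (M : Matrix (ι × Fin k) (ι × Fin k) ℂ) : Matrix (ι × Fin k) (ι × Fin k) ℂ :=
  Matrix.of fun p q => Λ (Matrix.of fun i j => M (i, p.2) (j, q.2)) p.1 q.1

/-- A linear map on matrices is CPTP (a quantum channel) if all its amplifications
preserve positive semidefiniteness and it preserves the trace. -/
def IsCPTP {ι : Type*} [Fintype ι] [DecidableEq ι]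
    (Λ : Matrix ι ι ℂ →ₗ[ℂ] Matrix ι ι ℂ) : Prop :=
  (∀ (k : ℕ) (M : Matrix (ι × Fin k) (ι × Fin k) ℂ),
      M.PosSemidef → (amplify Λ k M).PosSemidef) ∧
  (∀ M, (Λ M).trace = M.trace)

/-- A quantum channel on a `d`-dimensional system. -/
structure QChannel (d : ℕ) where
  toFun : Matrix (Fin d) (Fin d) ℂ →ₗ[ℂ] Matrix (Fin d) (Fin d) ℂ
  cptp : IsCPTP toFun

/-- A resource theory: a convex compact set `F` of free states and a set `O` of free
operations containing the identity, closed under composition, preserving `F`, and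
containing the state-preparation channel `ρ ↦ Tr(ρ)σ` for every free `σ`. -/
structure ResourceTheory (d : ℕ) where
  F : Set (Matrix (Fin d) (Fin d) ℂ)
  O : Set (QChannel d)
  F_density : ∀ σ ∈ F, IsDensityMatrix σ
  F_convex : Convex ℝ F
  F_compact : IsCompact F
  id_mem : ∃ Λ ∈ O, ∀ ρ, Λ.toFun ρ = ρ
  comp_mem : ∀ Λ₁ ∈ O, ∀ Λ₂ ∈ O, ∃ Λ ∈ O, ∀ ρ, Λ.toFun ρ = Λ₂.toFun (Λ₁.toFun ρ)
  free_mapsto : ∀ Λ ∈ O, ∀ σ ∈ F, Λ.toFun σ ∈ F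
  prep_mem : ∀ σ ∈ F, ∃ Λ ∈ O, ∀ ρ : Matrix (Fin d) (Fin d) ℂ, Λ.toFun ρ = ρ.trace • σ

/-- `ρ → σ`: for every `ε > 0` some free operation maps `ρ` within trace-distance `ε` of `σ`. -/
def Converts {d : ℕ} (RT : ResourceTheory d) (ρ σ : Matrix (Fin d) (Fin d) ℂ) : Prop :=
  ∀ ε > 0, ∃ Λ ∈ RT.O, traceNorm (Λ.toFun ρ - σ) < ε

/-- A resource monotone: nonnegative on states, nonincreasing under free operations,
vanishing on free states. -/
def IsMonotone {d : ℕ} (RT : ResourceTheory d) (R : Matrix (Fin d) (Fin d) ℂ → ℝ) : Prop :=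
  (∀ ρ, IsDensityMatrix ρ → 0 ≤ R ρ) ∧
  (∀ ρ, IsDensityMatrix ρ → ∀ Λ ∈ RT.O, R (Λ.toFun ρ) ≤ R ρ) ∧
  (∀ σ ∈ RT.F, R σ = 0)

/-- The pure state `|ψ⟩⟨ψ|`. -/
def pureState {ι : Type*} (ψ : ι → ℂ) : Matrix ι ι ℂ :=
  Matrix.vecMulVec ψ (star ψ)

/-- `ψ` is a unit vector. -/
def IsUnitVec {ι : Type*} [Fintype ι] (ψ : ι → ℂ) : Prop :=
  ∑ i, Complex.normSq (ψ i) = 1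

/-- Trace-norm distance from `ρ` to a set of states. -/
noncomputable def distToSet {ι : Type*} [Fintype ι] [DecidableEq ι]
    (F : Set (Matrix ι ι ℂ)) (ρ : Matrix ι ι ℂ) : ℝ :=
  sInf ((fun μ => traceNorm (ρ - μ)) '' F)


set_option linter.unusedSectionVars false
namespace Aux9

open Matrix Complex Finset

variable {ι : Type*} [Fintype ι] [DecidableEq ι]

/-- Cauchy–Schwarz for complex sums in `normSq` form. -/
lemma normSq_sum_mul_le (f g : ι → ℂ) :
    normSq (∑ i, f i * g i) ≤ (∑ i, normSq (f i)) * (∑ i, normSq (g i)) := by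
  have h1 : ‖∑ i, f i * g i‖ ≤ ∑ i, ‖f i‖ * ‖g i‖ := by
    calc ‖∑ i, f i * g i‖ ≤ ∑ i, ‖f i * g i‖ :=
          norm_sum_le _ _
      _ = ∑ i, ‖f i‖ * ‖g i‖ := by
          simp [norm_mul]
  calc normSq (∑ i, f i * g i) = ‖∑ i, f i * g i‖ ^ 2 := (Complex.sq_norm _).symm
    _ ≤ (∑ i, ‖f i‖ * ‖g i‖) ^ 2 := by
        apply pow_le_pow_left₀ (norm_nonneg _) h1
    _ ≤ (∑ i, ‖f i‖ ^ 2) * (∑ i, ‖g i‖ ^ 2) :=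
        Finset.sum_mul_sq_le_sq_mul_sq _ _ _
    _ = _ := by simp [Complex.sq_norm]

lemma star_dotProduct_self (x : ι → ℂ) :
    star x ⬝ᵥ x = ((∑ i, normSq (x i) : ℝ) : ℂ) := by
  push_cast
  simp only [dotProduct, Pi.star_apply]
  refine Finset.sum_congr rfl fun i _ => ?_
  rw [← Complex.mul_conj]
  exact mul_comm _ _


/-- Hermitian quadratic forms are real. -/
lemma im_dotProduct_eq_zero {M : Matrix ι ι ℂ} (hM : M.IsHermitian) (x : ι → ℂ) :
    (star x ⬝ᵥ M *ᵥ x).im = 0 := by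
  have h : star (star x ⬝ᵥ M *ᵥ x) = star x ⬝ᵥ M *ᵥ x := by
    conv_lhs => rw [← Matrix.star_dotProduct_star, star_star, Matrix.star_mulVec, hM.eq,
      ← Matrix.dotProduct_mulVec]
  exact Complex.conj_eq_iff_im.mp h

/-- For a PSD matrix, `re ⟨x, M x⟩ ≤ re (Tr M) * ‖x‖²`. -/
lemma re_dotProduct_le_trace {M : Matrix ι ι ℂ} (hM : M.PosSemidef) (x : ι → ℂ) :
    (star x ⬝ᵥ M *ᵥ x).re ≤ M.trace.re * ∑ i, normSq (x i) := by
  obtain ⟨A, rfl⟩ : ∃ A : Matrix ι ι ℂ, M = Aᴴ * A := by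
    open scoped MatrixOrder in exact CStarAlgebra.nonneg_iff_eq_star_mul_self.mp hM.nonneg
  have hdot : star x ⬝ᵥ (Aᴴ * A) *ᵥ x = ((∑ i, normSq ((A *ᵥ x) i) : ℝ) : ℂ) := by
    rw [← Matrix.mulVec_mulVec, Matrix.dotProduct_mulVec, ← Matrix.star_mulVec,
      star_dotProduct_self]
  have htr : (Aᴴ * A).trace.re = ∑ j, ∑ i, normSq (A i j) := by
    simp only [Matrix.trace, Matrix.diag, Matrix.mul_apply, Matrix.conjTranspose_apply]
    rw [Complex.re_sum]
    refine Finset.sum_congr rfl fun j _ => ?_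
    rw [Complex.re_sum]
    refine Finset.sum_congr rfl fun i _ => ?_
    rw [RCLike.star_def, ← Complex.normSq_eq_conj_mul_self]
    simp
  rw [hdot, htr, Complex.ofReal_re,
    show (∑ j, ∑ i, normSq (A i j)) = ∑ i, ∑ j, normSq (A i j) from Finset.sum_comm,
    Finset.sum_mul]
  refine Finset.sum_le_sum fun i _ => ?_
  exact normSq_sum_mul_le (fun j => A i j) x

/-- Entrywise Cauchy–Schwarz for PSD matrices. -/
lemma normSq_entry_le {M : Matrix ι ι ℂ} (hM : M.PosSemidef) (i j : ι) :
    normSq (M i j) ≤ (M i i).re * (M j j).re := by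
  obtain ⟨A, rfl⟩ : ∃ A : Matrix ι ι ℂ, M = Aᴴ * A := by
    open scoped MatrixOrder in exact CStarAlgebra.nonneg_iff_eq_star_mul_self.mp hM.nonneg
  have hdiag : ∀ k, ((Aᴴ * A) k k).re = ∑ l, normSq (A l k) := by
    intro k
    simp only [Matrix.mul_apply, Matrix.conjTranspose_apply]
    rw [Complex.re_sum]
    refine Finset.sum_congr rfl fun l _ => ?_
    rw [RCLike.star_def, ← Complex.normSq_eq_conj_mul_self]; simp
  rw [hdiag, hdiag]
  have := normSq_sum_mul_le (fun k => (starRingEnd ℂ) (A k i)) (fun k => A k j)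
  simp only [Complex.normSq_conj] at this
  simpa [Matrix.mul_apply, Matrix.conjTranspose_apply] using this


/-- Positive definite matrices are bounded below by a multiple of identity, quadratic form. -/
lemma posdef_lower [Nonempty ι] {A : Matrix ι ι ℂ} (hA : A.PosDef) :
    ∃ c : ℝ, 0 < c ∧ ∀ x : ι → ℂ, c * ∑ i, normSq (x i) ≤ (star x ⬝ᵥ A *ᵥ x).re := by
  have hH := hA.1
  set c := Finset.univ.inf' Finset.univ_nonempty hH.eigenvalues with hcdef
  have hc : 0 < c := by
    rw [hcdef, Finset.lt_inf'_iff]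
    exact fun i _ => hA.eigenvalues_pos i
  have hdPSD : (Matrix.diagonal (fun i => ((hH.eigenvalues i - c : ℝ) : ℂ))).PosSemidef := by
    refine Matrix.PosSemidef.diagonal fun i => ?_
    show (0 : ℂ) ≤ _
    rw [Complex.zero_le_real]
    exact sub_nonneg.mpr (Finset.inf'_le _ (Finset.mem_univ i))
  set U : Matrix ι ι ℂ := (hH.eigenvectorUnitary : Matrix ι ι ℂ) with hUdef
  have hUU : U * star U = 1 := (Matrix.mem_unitaryGroup_iff).mp hH.eigenvectorUnitary.2
  have key : A - (c:ℂ) • 1 = U * (Matrix.diagonal (fun i => ((hH.eigenvalues i - c : ℝ) : ℂ))) * Uᴴ := by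
    have hd : Matrix.diagonal (fun i => ((hH.eigenvalues i - c : ℝ) : ℂ))
        = Matrix.diagonal (RCLike.ofReal ∘ hH.eigenvalues) - (c:ℂ) • 1 := by
      ext i j
      by_cases hij : i = j
      · subst hij
        simp only [Matrix.diagonal_apply_eq, Matrix.sub_apply, Matrix.smul_apply,
          Matrix.one_apply_eq, Function.comp_apply, smul_eq_mul, mul_one]
        push_cast
        rw [sub_eq_neg_add]
        exact neg_add_eq_sub _ _
      · simp [Matrix.diagonal_apply_ne _ hij, Matrix.one_apply_ne hij]
    rw [hd, Matrix.mul_sub, Matrix.sub_mul]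
    have : Uᴴ = star U := rfl
    rw [this, show U * diagonal (RCLike.ofReal ∘ hH.eigenvalues) * star U = A from
      hH.spectral_theorem.symm]
    congr 1
    rw [Matrix.mul_smul, Matrix.smul_mul, mul_one, hUU]
  have hsub : (A - (c:ℂ) • 1).PosSemidef := by
    rw [key]
    exact hdPSD.mul_mul_conjTranspose_same U
  refine ⟨c, hc, fun x => ?_⟩
  have h0 := hsub.re_dotProduct_nonneg x
  rw [Matrix.sub_mulVec, dotProduct_sub, Matrix.smul_mulVec, Matrix.one_mulVec,
    dotProduct_smul, star_dotProduct_self x] at h0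
  simp only [RCLike.re_to_complex, Complex.sub_re, smul_eq_mul, Complex.mul_re,
    Complex.ofReal_re, Complex.ofReal_im, mul_zero, sub_zero, zero_mul] at h0
  linarith


lemma sum_normSq_le_one {σ : Matrix ι ι ℂ} (hσ : σ.PosSemidef) (htr : σ.trace = 1) :
    ∑ k, ∑ l, normSq (σ k l) ≤ 1 := by
  have hdiag : ∑ k, (σ k k).re = 1 := by
    have h := congrArg Complex.re htr
    rw [Matrix.trace, Complex.re_sum] at h
    simpa [Matrix.diag] using h
  calc ∑ k, ∑ l, normSq (σ k l) ≤ ∑ k, ∑ l, (σ k k).re * (σ l l).re :=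
      Finset.sum_le_sum fun k _ => Finset.sum_le_sum fun l _ => normSq_entry_le hσ k l
    _ = (∑ k, (σ k k).re) * (∑ l, (σ l l).re) := (Finset.sum_mul_sum _ _ _ _).symm
    _ = 1 := by rw [hdiag, one_mul]

lemma entry_close {σ : Matrix ι ι ℂ} (hσ : σ.PosSemidef) (htr : σ.trace = 1)
    {φ : ι → ℂ} (hφ : ∑ i, normSq (φ i) = 1) (i j : ι) :
    normSq (σ i j - φ i * (starRingEnd ℂ) (φ j)) ≤ 2 * (1 - (star φ ⬝ᵥ σ *ᵥ φ).re) := by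
  have hterm : ∀ k l : ι, normSq (σ k l - φ k * (starRingEnd ℂ) (φ l))
      = normSq (σ k l) + normSq (φ k * (starRingEnd ℂ) (φ l))
        - 2 * (σ k l * (starRingEnd ℂ) (φ k * (starRingEnd ℂ) (φ l))).re :=
    fun k l => Complex.normSq_sub _ _
  have hstep1 : normSq (σ i j - φ i * (starRingEnd ℂ) (φ j))
      ≤ ∑ k, ∑ l, normSq (σ k l - φ k * (starRingEnd ℂ) (φ l)) := by
    have h1 : normSq (σ i j - φ i * (starRingEnd ℂ) (φ j))
        ≤ ∑ l, normSq (σ i l - φ i * (starRingEnd ℂ) (φ l)) :=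
      Finset.single_le_sum (f := fun l => normSq (σ i l - φ i * (starRingEnd ℂ) (φ l)))
        (fun l _ => Complex.normSq_nonneg _) (Finset.mem_univ j)
    exact h1.trans (Finset.single_le_sum
      (f := fun k => ∑ l, normSq (σ k l - φ k * (starRingEnd ℂ) (φ l)))
      (fun k _ => Finset.sum_nonneg fun l _ => Complex.normSq_nonneg _) (Finset.mem_univ i))
  have hSP : ∑ k, ∑ l, normSq (φ k * (starRingEnd ℂ) (φ l)) = 1 := by
    simp only [Complex.normSq_mul, Complex.normSq_conj]
    rw [← Finset.sum_mul_sum, hφ, one_mul]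
  have hT : ∑ k, ∑ l, (σ k l * (starRingEnd ℂ) (φ k * (starRingEnd ℂ) (φ l))).re
      = (star φ ⬝ᵥ σ *ᵥ φ).re := by
    rw [dotProduct, Complex.re_sum]
    refine Finset.sum_congr rfl fun k _ => ?_
    have hkl : (star φ) k * (σ *ᵥ φ) k
        = ∑ l, σ k l * (starRingEnd ℂ) (φ k * (starRingEnd ℂ) (φ l)) := by
      simp only [Pi.star_apply, Matrix.mulVec, dotProduct, Finset.mul_sum]
      refine Finset.sum_congr rfl fun l _ => ?_
      simp only [RCLike.star_def, _root_.map_mul, Complex.conj_conj]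
      ring
    rw [hkl, Complex.re_sum]
  have hsum : ∑ k, ∑ l, normSq (σ k l - φ k * (starRingEnd ℂ) (φ l))
      = (∑ k, ∑ l, normSq (σ k l)) + (∑ k, ∑ l, normSq (φ k * (starRingEnd ℂ) (φ l)))
        - 2 * ∑ k, ∑ l, (σ k l * (starRingEnd ℂ) (φ k * (starRingEnd ℂ) (φ l))).re := by
    have hrow : ∀ k : ι, ∑ l, normSq (σ k l - φ k * (starRingEnd ℂ) (φ l))
        = (∑ l, normSq (σ k l)) + (∑ l, normSq (φ k * (starRingEnd ℂ) (φ l)))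
          - 2 * ∑ l, (σ k l * (starRingEnd ℂ) (φ k * (starRingEnd ℂ) (φ l))).re := by
      intro k
      rw [Finset.mul_sum, ← Finset.sum_add_distrib, ← Finset.sum_sub_distrib]
      exact Finset.sum_congr rfl fun l _ => hterm k l
    rw [Finset.mul_sum, ← Finset.sum_add_distrib, ← Finset.sum_sub_distrib]
    exact Finset.sum_congr rfl fun k _ => hrow k
  have hSσ := sum_normSq_le_one hσ htr
  have := hstep1.trans (le_of_eq hsum)
  rw [hSP, hT] at this
  linarith

end Aux9

lemma Aux9.cp_pos {ι : Type*} [Fintype ι] [DecidableEq ι]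
    (Λ : Matrix ι ι ℂ →ₗ[ℂ] Matrix ι ι ℂ)
    (hcp : ∀ (k : ℕ) (M : Matrix (ι × Fin k) (ι × Fin k) ℂ),
      M.PosSemidef → (amplify Λ k M).PosSemidef)
    {M : Matrix ι ι ℂ} (hM : M.PosSemidef) : (Λ M).PosSemidef := by
  have h1 := hcp 1 (M.submatrix Prod.fst Prod.fst) (hM.submatrix _)
  have h2 := h1.submatrix (fun i : ι => (i, (0 : Fin 1)))
  have hMM : (Matrix.of fun a b =>
      M.submatrix Prod.fst Prod.fst (a, (0 : Fin 1)) (b, (0 : Fin 1))) = M := by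
    ext a b; simp
  have heq : (amplify Λ 1 (M.submatrix Prod.fst Prod.fst)).submatrix
      (fun i : ι => (i, (0 : Fin 1))) (fun i : ι => (i, (0 : Fin 1))) = Λ M := by
    ext i j
    show (amplify Λ 1 (M.submatrix Prod.fst Prod.fst)) (i, 0) (j, 0) = Λ M i j
    show Λ (Matrix.of fun a b =>
      M.submatrix Prod.fst Prod.fst (a, (0 : Fin 1)) (b, (0 : Fin 1))) i j = Λ M i j
    rw [hMM]
  rwa [heq] at h2

/-- A full-rank state cannot be converted into a pure resource state:
if every channel in `O` maps the closed nonempty set `F` of free states into itself,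
`ρ` has full rank, and the pure state `|φ⟩⟨φ|` is not free, then it is not the case
that for every `ε > 0` some `Λ ∈ O` achieves `⟨φ|Λ(ρ)|φ⟩ > 1 − ε`. -/
theorem full_rank_not_convertible_to_pure {d : ℕ}
    (F : Set (Matrix (Fin d) (Fin d) ℂ)) (hFne : F.Nonempty) (hFclosed : IsClosed F)
    (hFdm : ∀ σ ∈ F, IsDensityMatrix σ)
    (O : Set (QChannel d)) (hO : ∀ Λ ∈ O, ∀ σ ∈ F, Λ.toFun σ ∈ F)
    (ρ : Matrix (Fin d) (Fin d) ℂ) (hρ : IsDensityMatrix ρ) (hfull : ρ.PosDef)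
    (φ : Fin d → ℂ) (hφ : IsUnitVec φ) (hφF : pureState φ ∉ F) :
    ¬ (∀ ε > (0 : ℝ), ∃ Λ ∈ O,
        1 - ε < (star φ ⬝ᵥ (Λ.toFun ρ).mulVec φ).re) := by
  intro h
  rcases Nat.eq_zero_or_pos d with hd | hd
  · subst hd
    have : (0:ℝ) = 1 := by simpa [IsUnitVec] using hφ
    norm_num at this
  haveI : Nonempty (Fin d) := Fin.pos_iff_nonempty.mp hd
  have hφ1 : ∑ i, Complex.normSq (φ i) = 1 := hφ
  obtain ⟨σ₀, hσ₀F⟩ := hFne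
  obtain ⟨hσ₀psd, hσ₀tr⟩ := hFdm σ₀ hσ₀F
  obtain ⟨c, hc, hlow⟩ := Aux9.posdef_lower hfull
  have hsm : ((c:ℂ) • σ₀).IsHermitian := by
    show ((c:ℂ) • σ₀)ᴴ = _
    rw [Matrix.conjTranspose_smul, hσ₀psd.1.eq]
    simp [Complex.conj_ofReal]
  have hsub : (ρ - (c:ℂ) • σ₀).PosSemidef := by
    refine Matrix.PosSemidef.of_dotProduct_mulVec_nonneg ?_ ?_
    · exact hρ.1.1.sub hsm
    · intro x
      have him1 := Aux9.im_dotProduct_eq_zero hρ.1.1 x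
      have him2 := Aux9.im_dotProduct_eq_zero hσ₀psd.1 x
      have hre2 : (star x ⬝ᵥ σ₀ *ᵥ x).re ≤ ∑ i, Complex.normSq (x i) := by
        have h' := Aux9.re_dotProduct_le_trace hσ₀psd x
        rw [hσ₀tr] at h'
        simpa using h'
      have hre1 := hlow x
      rw [Matrix.sub_mulVec, dotProduct_sub, Matrix.smul_mulVec,
        dotProduct_smul, Complex.le_def]
      constructor
      · simp only [Complex.zero_re, Complex.sub_re, smul_eq_mul, Complex.mul_re,
          Complex.ofReal_re, Complex.ofReal_im, zero_mul, sub_zero]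
        nlinarith
      · simp [Complex.sub_im, Complex.mul_im, him1, him2]
  have key : ∀ ε : ℝ, 0 < ε → ∃ σ ∈ F, 1 - ε < (star φ ⬝ᵥ σ *ᵥ φ).re := by
    intro ε hε
    obtain ⟨Λ, hΛO, hΛ⟩ := h (c * ε) (by positivity)
    refine ⟨Λ.toFun σ₀, hO Λ hΛO σ₀ hσ₀F, ?_⟩
    have hrest : (Λ.toFun (ρ - (c:ℂ) • σ₀)).PosSemidef := Aux9.cp_pos Λ.toFun Λ.cptp.1 hsub
    have htr2 : (Λ.toFun (ρ - (c:ℂ) • σ₀)).trace = 1 - (c:ℂ) := by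
      rw [Λ.cptp.2, Matrix.trace_sub, Matrix.trace_smul, hρ.2, hσ₀tr]
      simp
    have hb : (star φ ⬝ᵥ (Λ.toFun (ρ - (c:ℂ) • σ₀)) *ᵥ φ).re ≤ 1 - c := by
      have h' := Aux9.re_dotProduct_le_trace hrest φ
      rw [htr2] at h'
      simpa [Complex.sub_re, hφ1] using h'
    have hsplit : (star φ ⬝ᵥ (Λ.toFun ρ) *ᵥ φ).re
        = c * (star φ ⬝ᵥ (Λ.toFun σ₀) *ᵥ φ).re
          + (star φ ⬝ᵥ (Λ.toFun (ρ - (c:ℂ) • σ₀)) *ᵥ φ).re := by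
      have hρeq : ρ = (c:ℂ) • σ₀ + (ρ - (c:ℂ) • σ₀) := by abel
      conv_lhs => rw [hρeq]
      rw [map_add, map_smul, Matrix.add_mulVec, dotProduct_add,
        Matrix.smul_mulVec, dotProduct_smul]
      simp [Complex.add_re, Complex.mul_re]
    have h1 : 1 - c * ε < (star φ ⬝ᵥ (Λ.toFun ρ) *ᵥ φ).re := hΛ
    rw [hsplit] at h1
    have h2 : c * (1 - ε) < c * (star φ ⬝ᵥ (Λ.toFun σ₀) *ᵥ φ).re := by nlinarith
    exact (mul_lt_mul_iff_right₀ hc).mp h2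
  have hseq : ∀ n : ℕ, ∃ σ, σ ∈ F ∧ 1 - 1/(n+1) < (star φ ⬝ᵥ σ *ᵥ φ).re := by
    intro n
    obtain ⟨σ, h1, h2⟩ := key (1/(n+1)) (by positivity)
    exact ⟨σ, h1, h2⟩
  choose s hsF hsval using hseq
  have hPa : ∀ i j, pureState φ i j = φ i * (starRingEnd ℂ) (φ j) := by
    intro i j
    simp [pureState, Matrix.vecMulVec_apply, RCLike.star_def]
  have htend : Filter.Tendsto s Filter.atTop (nhds (pureState φ)) := by
    refine tendsto_pi_nhds.mpr ?_
    intro i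
    rw [tendsto_pi_nhds]
    intro j
    rw [tendsto_iff_dist_tendsto_zero]
    have hbd : ∀ n : ℕ, dist (s n i j) (pureState φ i j) ≤ Real.sqrt (2 * (1/(n+1))) := by
      intro n
      obtain ⟨hpsd, htrn⟩ := hFdm (s n) (hsF n)
      have hub : Complex.normSq (s n i j - pureState φ i j) ≤ 2 * (1/(n+1)) := by
        rw [hPa i j]
        calc Complex.normSq (s n i j - φ i * (starRingEnd ℂ) (φ j))
            ≤ 2 * (1 - (star φ ⬝ᵥ (s n) *ᵥ φ).re) := Aux9.entry_close hpsd htrn hφ1 i j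
          _ ≤ 2 * (1/(n+1)) := by
              have := hsval n
              linarith
      rw [Complex.dist_eq, Complex.norm_def]
      exact Real.sqrt_le_sqrt hub
    refine squeeze_zero (fun n => dist_nonneg) hbd ?_
    have h0 : Filter.Tendsto (fun n : ℕ => 2 * (1/(n+1) : ℝ)) Filter.atTop (nhds 0) := by
      simpa using tendsto_one_div_add_atTop_nhds_zero_nat.const_mul (2:ℝ)
    have h1 := (Real.continuous_sqrt.tendsto 0).comp h0
    rw [Real.sqrt_zero] at h1
    exact h1
  exact hφF (hFclosed.mem_of_tendsto htend (Filter.Eventually.of_forall hsF))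

end
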